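/- Let X > 1 be a real number and let u be a prime. Then Σ_{1 ≤ m ≤ X, gcd(m,u)=1} μ(m)/m² ≥ 6/π² − 1/X² − 1/X, where μ is the Möbius function and the sum is over positive integers m ≤ X coprime to u. -/

import Mathlib

open ArithmeticFunction Finset

private lemma mob_abs_le (m : ℕ) : |(ArithmeticFunction.moebius m : ℝ)| ≤ 1 := by
  have := ArithmeticFunction.abs_moebius_le_one (n := m)
  exact_mod_cast (by exact_mod_cast this : |((ArithmeticFunction.moebius m : ℤ) : ℝ)| ≤ 1)

private lemma summable_bound (c : ℕ) :
    Summable (fun k : ℕ => (((k + c : ℕ) : ℝ) ^ 2)⁻¹) := by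
  have h : Summable (fun n : ℕ => ((n : ℝ) ^ 2)⁻¹) := by
    have := (Real.summable_one_div_nat_pow (p := 2)).mpr one_lt_two
    simpa [one_div] using this
  exact_mod_cast (summable_nat_add_iff c).mpr h

private lemma summable_f :
    Summable (fun m : ℕ => (ArithmeticFunction.moebius m : ℝ) / (m : ℝ) ^ 2) := by
  apply Summable.of_norm_bounded (g := fun m : ℕ => ((m : ℝ) ^ 2)⁻¹)
  · simpa using summable_bound 0
  · intro m
    rcases eq_or_ne m 0 with rfl | hm
    · simp
    · rw [norm_div, norm_pow, Real.norm_natCast, div_le_iff₀ (by positivity),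
        inv_mul_cancel₀ (by positivity)]
      simpa [Real.norm_eq_abs] using mob_abs_le m

private lemma tsum_f :
    ∑' m : ℕ, (ArithmeticFunction.moebius m : ℝ) / (m : ℝ) ^ 2 = 6 / Real.pi ^ 2 := by
  have hterm : ∀ n : ℕ, LSeries.term (fun n => ((ArithmeticFunction.moebius n : ℤ) : ℂ)) 2 n
      = (((ArithmeticFunction.moebius n : ℝ) / (n : ℝ) ^ 2 : ℝ) : ℂ) := by
    intro n
    rcases eq_or_ne n 0 with rfl | hn
    · simp
    · rw [LSeries.term_of_ne_zero hn, show (2 : ℂ) = ((2 : ℕ) : ℂ) by norm_num,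
        Complex.cpow_natCast]
      push_cast
      ring
  have hL : LSeries (fun n => ((ArithmeticFunction.moebius n : ℤ) : ℂ)) 2
      = 6 / (Real.pi : ℂ) ^ 2 := by
    have h := ArithmeticFunction.LSeries_zeta_mul_Lseries_moebius (s := 2) (by norm_num)
    have h2 : LSeries (fun n => ((ArithmeticFunction.zeta n : ℕ) : ℂ)) 2 = riemannZeta 2 :=
      LSeries_zeta_eq_riemannZeta (by norm_num)
    rw [h2, riemannZeta_two] at h
    have hpi : ((Real.pi : ℂ)) ^ 2 ≠ 0 := by
      simpa using Complex.ofReal_ne_zero.mpr Real.pi_ne_zero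
    field_simp at h ⊢
    linear_combination h
  apply Complex.ofReal_injective
  rw [Complex.ofReal_tsum]
  simp_rw [← hterm]
  rw [show (∑' n, LSeries.term (fun n => ((ArithmeticFunction.moebius n : ℤ) : ℂ)) 2 n)
      = LSeries (fun n => ((ArithmeticFunction.moebius n : ℤ) : ℂ)) 2 from rfl, hL]
  push_cast
  ring

private lemma tail_sum_le (c : ℕ) (hc : 1 ≤ c) :
    ∑' k : ℕ, (((k + c + 1 : ℕ) : ℝ) ^ 2)⁻¹ ≤ (c : ℝ)⁻¹ := by
  have hcR : (1 : ℝ) ≤ (c : ℝ) := by exact_mod_cast hc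
  have hsum : Summable (fun k : ℕ => (((k + c + 1 : ℕ) : ℝ) ^ 2)⁻¹) :=
    summable_bound (c + 1)
  have hpartial : ∀ M : ℕ, ∑ k ∈ Finset.range M, (((k + c + 1 : ℕ) : ℝ) ^ 2)⁻¹
      ≤ (c : ℝ)⁻¹ - ((c : ℝ) + M)⁻¹ := by
    intro M
    induction M with
    | zero => simp
    | succ M ih =>
      rw [Finset.sum_range_succ]
      have ht : (1 : ℝ) ≤ (c : ℝ) + M := by
        have : (0:ℝ) ≤ (M:ℝ) := Nat.cast_nonneg M
        linarith
      set t : ℝ := (c : ℝ) + M with hts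
      have ht0 : 0 < t := lt_of_lt_of_le one_pos ht
      have hcast : ((M + c + 1 : ℕ) : ℝ) = t + 1 := by push_cast [hts]; ring
      have hstep : (((M + c + 1 : ℕ) : ℝ) ^ 2)⁻¹ ≤ t⁻¹ - (t + 1)⁻¹ := by
        rw [hcast]
        have h1 : t⁻¹ - (t + 1)⁻¹ = (t * (t + 1))⁻¹ := by
          field_simp
          ring
        rw [h1]
        apply inv_anti₀ (by positivity)
        nlinarith
      have hMc : ((c : ℝ) + (M + 1 : ℕ)) = t + 1 := by push_cast [hts]; ring
      rw [hMc]
      linarith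
  apply Summable.tsum_le_of_sum_le hsum
  intro s
  obtain ⟨M, hM⟩ := s.exists_nat_subset_range
  calc ∑ k ∈ s, (((k + c + 1 : ℕ) : ℝ) ^ 2)⁻¹
      ≤ ∑ k ∈ Finset.range M, (((k + c + 1 : ℕ) : ℝ) ^ 2)⁻¹ :=
        Finset.sum_le_sum_of_subset_of_nonneg hM (fun i _ _ => by positivity)
    _ ≤ (c : ℝ)⁻¹ - ((c : ℝ) + M)⁻¹ := hpartial M
    _ ≤ (c : ℝ)⁻¹ := by
        have : 0 ≤ ((c : ℝ) + M)⁻¹ := by positivity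
        linarith

theorem moebius_sum_lower_bound (X : ℝ) (hX : 1 < X) (u : ℕ) (hu : u.Prime) :
    6 / Real.pi ^ 2 - 1 / X ^ 2 - 1 / X ≤
      ∑ m ∈ (Finset.Icc 1 ⌊X⌋₊).filter (fun m => Nat.gcd m u = 1),
        ((ArithmeticFunction.moebius m : ℝ) / (m : ℝ) ^ 2) := by
  set f : ℕ → ℝ := fun m => (ArithmeticFunction.moebius m : ℝ) / (m : ℝ) ^ 2 with hf
  set g : ℕ → ℝ := fun m => if Nat.gcd m u = 1 then f m else 0 with hg
  have hu1 : 1 < u := hu.one_lt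
  set N : ℕ := ⌊X⌋₊ with hN
  have hN1 : 1 ≤ N := by
    rw [hN, Nat.one_le_floor_iff]; exact hX.le
  have hXN : X < (N : ℝ) + 1 := by
    rw [hN]; exact_mod_cast Nat.lt_floor_add_one X
  have hg0 : g 0 = 0 := by
    simp [hg, Nat.gcd_zero_left, hu1.ne']
  have habs : ∀ m : ℕ, |g m| ≤ ((m : ℝ) ^ 2)⁻¹ := by
    intro m
    rcases eq_or_ne m 0 with rfl | hm
    · simp [hg0]
    have hm2 : (0 : ℝ) < (m : ℝ) ^ 2 := by positivity
    rw [hg]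
    dsimp only
    split
    · rw [hf]
      dsimp only
      rw [abs_div, abs_pow, abs_of_nonneg (by positivity : (0:ℝ) ≤ (m:ℝ)),
        div_le_iff₀ hm2, inv_mul_cancel₀ hm2.ne']
      exact mob_abs_le m
    · simp [le_of_lt (inv_pos.mpr hm2)]
  have hgsum : Summable g := by
    apply Summable.of_norm_bounded (g := fun m : ℕ => ((m : ℝ) ^ 2)⁻¹)
    · simpa using summable_bound 0
    · simpa [Real.norm_eq_abs] using habs
  have hfsum : Summable f := summable_f
  have hpi : 0 < 6 / Real.pi ^ 2 := by positivity
  -- Step 1: the infinite coprime sum is at least 6/π²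
  have hgu : ∀ k : ℕ, g (u * k) = 0 := by
    intro k
    have hd : u ∣ Nat.gcd (u * k) u := Nat.dvd_gcd (dvd_mul_right u k) dvd_rfl
    have : Nat.gcd (u * k) u ≠ 1 := by
      intro h1
      rw [h1] at hd
      exact absurd (Nat.le_of_dvd one_pos hd) (by omega)
    rw [hg]
    dsimp only
    rw [if_neg this]
  have hnotco : ∀ m : ℕ, Nat.gcd m u ≠ 1 → u ∣ m := by
    intro m hm
    by_contra hdvd
    exact hm (Nat.Coprime.gcd_eq_one ((hu.coprime_iff_not_dvd.mpr hdvd).symm))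
  have hS : 6 / Real.pi ^ 2 ≤ ∑' m, g m := by
    set S : ℝ := ∑' m, g m with hSdef
    have hkey : ∑' m, (f m - g m) = -(((u : ℝ) ^ 2)⁻¹) * S := by
      have hinj : Function.Injective (fun k : ℕ => u * k) := fun a b hab => by
        exact Nat.eq_of_mul_eq_mul_left (by omega) hab
      have hsupp : Function.support (fun m => f m - g m) ⊆ Set.range (fun k : ℕ => u * k) := by
        intro m hm
        have hgcd : Nat.gcd m u ≠ 1 := by
          intro h1
          apply hm
          simp [hg, h1]
        obtain ⟨k, hk⟩ := hnotco m hgcd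
        exact ⟨k, hk.symm⟩
      have hre := hinj.tsum_eq (f := fun m => f m - g m) hsupp
      have hterm : ∀ k : ℕ, f (u * k) - g (u * k) = -(((u : ℝ) ^ 2)⁻¹) * g k := by
        intro k
        rw [hgu k, sub_zero]
        rcases eq_or_ne (Nat.gcd k u) 1 with hco | hco
        · have hcop : Nat.Coprime u k := (Nat.coprime_comm).mp hco
          have hmul : ArithmeticFunction.moebius (u * k)
              = ArithmeticFunction.moebius u * ArithmeticFunction.moebius k :=
            ArithmeticFunction.isMultiplicative_moebius.map_mul_of_coprime hcop
          have hk0 : k ≠ 0 := by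
            intro h0
            rw [h0] at hco
            simp [Nat.gcd_zero_left] at hco
            omega
          rw [hg]
          dsimp only
          rw [if_pos hco, hf]
          dsimp only
          rw [hmul, ArithmeticFunction.moebius_apply_prime hu]
          push_cast
          have hkR : ((k : ℝ)) ≠ 0 := Nat.cast_ne_zero.mpr hk0
          have huR : ((u : ℝ)) ≠ 0 := Nat.cast_ne_zero.mpr (by omega)
          field_simp [hkR, huR]
        · have hdvd : u ∣ k := hnotco k hco
          have hnsq : ¬ Squarefree (u * k) := by
            intro hs
            exact hu.not_isUnit (hs u (mul_dvd_mul_left u hdvd |>.trans (dvd_refl _) |> fun h => by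
              simpa [pow_two] using (mul_dvd_mul_left u hdvd)))
          rw [hf, hg]
          dsimp only
          rw [if_neg hco, ArithmeticFunction.moebius_eq_zero_of_not_squarefree hnsq]
          simp
      calc ∑' m, (f m - g m) = ∑' k, (f (u * k) - g (u * k)) := hre.symm
        _ = ∑' k, -(((u : ℝ) ^ 2)⁻¹) * g k := by simp_rw [hterm]
        _ = -(((u : ℝ) ^ 2)⁻¹) * S := tsum_mul_left
    have hsub : ∑' m, (f m - g m) = (∑' m, f m) - S := Summable.tsum_sub hfsum hgsum
    rw [hsub, tsum_f] at hkey
    have hc1 : ((u : ℝ) ^ 2)⁻¹ < 1 := by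
      rw [inv_lt_one_iff₀]
      right
      have : (1 : ℝ) < (u : ℝ) := by exact_mod_cast hu1
      nlinarith
    have hc0 : 0 < ((u : ℝ) ^ 2)⁻¹ := by
      have : (0:ℝ) < (u:ℝ) := by exact_mod_cast (by omega : 0 < u)
      positivity
    nlinarith [hkey, hpi, hc0, hc1]
  -- Step 2: finite sum equals partial sum of g over range (N+1)
  have hfin : ∑ m ∈ (Finset.Icc 1 N).filter (fun m => Nat.gcd m u = 1), f m
      = ∑ m ∈ Finset.range (N + 1), g m := by
    rw [Finset.sum_filter]
    apply Finset.sum_subset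
    · intro m hm
      rw [Finset.mem_Icc] at hm
      rw [Finset.mem_range]
      omega
    · intro m hm hnm
      rw [Finset.mem_range] at hm
      rw [Finset.mem_Icc] at hnm
      have : m = 0 := by omega
      rw [this, if_neg (by rw [Nat.gcd_zero_left]; omega)]
  -- Step 3: tail bound
  have htail : (∑' m, g m) - ∑ m ∈ Finset.range (N + 1), g m ≤ 1 / X ^ 2 + 1 / X := by
    have hdecomp := Summable.sum_add_tsum_nat_add (f := g) (N + 1) hgsum
    have : (∑' m, g m) - ∑ m ∈ Finset.range (N + 1), g m = ∑' k, g (k + (N + 1)) := by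
      linarith [hdecomp]
    rw [this]
    have hb : ∀ k : ℕ, g (k + (N + 1)) ≤ (((k + (N + 1) : ℕ) : ℝ) ^ 2)⁻¹ :=
      fun k => (le_abs_self _).trans (habs _)
    have hsum1 : Summable (fun k => g (k + (N + 1))) := (summable_nat_add_iff (N + 1)).mpr hgsum
    have hle1 : ∑' k, g (k + (N + 1)) ≤ ∑' k : ℕ, (((k + (N + 1) : ℕ) : ℝ) ^ 2)⁻¹ :=
      Summable.tsum_le_tsum hb hsum1 (summable_bound (N + 1))
    have hsplit0 := Summable.tsum_eq_zero_add (summable_bound (N + 1))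
    have heq2 : ∑' k : ℕ, (((k + 1 + (N + 1) : ℕ) : ℝ) ^ 2)⁻¹
        = ∑' k : ℕ, (((k + N + 1 + 1 : ℕ) : ℝ) ^ 2)⁻¹ :=
      tsum_congr fun k => by rw [show k + 1 + (N + 1) = k + N + 1 + 1 from by omega]
    have hle2 : ∑' k : ℕ, (((k + N + 1 + 1 : ℕ) : ℝ) ^ 2)⁻¹ ≤ ((N + 1 : ℕ) : ℝ)⁻¹ :=
      tail_sum_le (N + 1) (by omega)
    have hXpos : 0 < X := lt_trans one_pos hX
    have hN1R : X ≤ ((N + 1 : ℕ) : ℝ) := by push_cast; linarith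
    have hfirst : ((((0 : ℕ) + (N + 1) : ℕ) : ℝ) ^ 2)⁻¹ ≤ 1 / X ^ 2 := by
      rw [one_div]
      apply inv_anti₀ (by positivity)
      have : X ≤ (((0 : ℕ) + (N + 1) : ℕ) : ℝ) := by push_cast; linarith
      nlinarith
    have hsecond : ((N + 1 : ℕ) : ℝ)⁻¹ ≤ 1 / X := by
      rw [one_div]
      exact inv_anti₀ hXpos hN1R
    calc ∑' k, g (k + (N + 1)) ≤ ∑' k : ℕ, (((k + (N + 1) : ℕ) : ℝ) ^ 2)⁻¹ := hle1
      _ = ((((0 : ℕ) + (N + 1) : ℕ) : ℝ) ^ 2)⁻¹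
          + ∑' k : ℕ, (((k + 1 + (N + 1) : ℕ) : ℝ) ^ 2)⁻¹ := hsplit0
      _ ≤ 1 / X ^ 2 + 1 / X := by
          rw [heq2]
          exact add_le_add hfirst (hle2.trans hsecond)
  linarith [hS, htail, hfin.ge, hfin.le]
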